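/- Fix d ≥ 1. Let Q↑d = {(a₁,…,a_d) ∈ ℚ^d : a₁ < … < a_d}, equipped with the d binary relations <₁,…,<_d given by ā <_i b̄ iff a_i < b_i. Let I₁,…,I_d be intervals of ℚ, each containing at least two elements, such that every element of I_i is less than every element of I_j whenever i < j (so the product I₁×…×I_d is contained in Q↑d). Let ≺ be a strict linear order on Q↑d that is first-order definable without parameters in the structure (Q↑d; <₁,…,<_d). Then there exists k ∈ {1,…,d} such that either for all ā, b̄ ∈ I₁×…×I_d, a_k < b_k implies ā ≺ b̄, or for all ā, b̄ ∈ I₁×…×I_d, a_k < b_k implies b̄ ≺ ā. -/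

import Mathlib

open FirstOrder FirstOrder.Language

/-- The set of strictly increasing d-tuples of rationals. -/
abbrev QUp (d : ℕ) : Type := {v : Fin d → ℚ // StrictMono v}

/-- The relation symbols: for each coordinate `i`, one binary symbol `<_i`. -/
def CoordRels (d : ℕ) : ℕ → Type
  | 2 => Fin d
  | _ => Empty

/-- The language with the `d` binary relation symbols `<₁, …, <_d`. -/
def CoordLang (d : ℕ) : FirstOrder.Language := ⟨fun _ => Empty, CoordRels d⟩

/-- Interpretation of the binary relation symbols: `u <_i v` iff `u i < v i`. -/
def coordBinary {d : ℕ} (r : Fin d) (v : Fin 2 → QUp d) : Prop :=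
  (v 0).1 r < (v 1).1 r

/-- The interpretation of the relation symbols on `QUp d`. -/
def coordRelInterp (d : ℕ) : ∀ n, CoordRels d n → (Fin n → QUp d) → Prop
  | 0, r, _ => r.elim
  | 1, r, _ => r.elim
  | 2, r, v => coordBinary r v
  | (_ + 3), r, _ => r.elim

/-- The structure `(Q↑d; <₁, …, <_d)`. -/
instance (d : ℕ) : (CoordLang d).Structure (QUp d) where
  funMap := fun f _ => f.elim
  RelMap := fun {n} r v => coordRelInterp d n r v


/-- Piecewise-linear map fixing `(-∞, c]` and scaling `[c, ∞)` so that `p ↦ q`. -/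
def plFun (c p q x : ℚ) : ℚ := if x ≤ c then x else c + (x - c) * ((q - c) / (p - c))

lemma plFun_strictMono {c p q : ℚ} (hp : c < p) (hq : c < q) : StrictMono (plFun c p q) := by
  intro x y hxy
  unfold plFun
  have hpc : (0:ℚ) < p - c := by linarith
  have hqc : (0:ℚ) < q - c := by linarith
  have hk : (0:ℚ) < (q - c) / (p - c) := by positivity
  by_cases hx : x ≤ c <;> by_cases hy : y ≤ c
  · simpa [hx, hy] using hxy
  · push_neg at hy
    simp only [if_pos hx, if_neg (not_le.mpr hy)]
    have h2 : 0 < (y - c) * ((q - c) / (p - c)) := by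
      have : (0:ℚ) < y - c := by linarith
      positivity
    linarith
  · exfalso; exact hx (le_trans hxy.le hy)
  · simp only [if_neg hx, if_neg hy]
    have := mul_lt_mul_of_pos_right (sub_lt_sub_right hxy c) hk
    linarith

lemma plFun_inv {c p q : ℚ} (hp : c < p) (hq : c < q) (x : ℚ) :
    plFun c p q (plFun c q p x) = x := by
  unfold plFun
  by_cases hx : x ≤ c
  · simp [hx]
  · push_neg at hx
    have hpc : (0:ℚ) < p - c := by linarith
    have hqc : (0:ℚ) < q - c := by linarith
    have h2 : 0 < (x - c) * ((p - c) / (q - c)) := by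
      have : (0:ℚ) < x - c := by linarith
      positivity
    rw [if_neg (not_le.mpr hx), if_neg (by push_neg; linarith)]
    field_simp
    ring

/-- The piecewise-linear order isomorphism of ℚ fixing `(-∞, c]` with `p ↦ q`. -/
def plIso (c p q : ℚ) (hp : c < p) (hq : c < q) : ℚ ≃o ℚ where
  toFun := plFun c p q
  invFun := plFun c q p
  left_inv := fun x => by
    have := plFun_inv hq hp x; exact this
  right_inv := fun x => plFun_inv hp hq x
  map_rel_iff' := @fun a b => (plFun_strictMono hp hq).le_iff_le

lemma plIso_fix {c p q : ℚ} (hp : c < p) (hq : c < q) {x : ℚ} (hx : x ≤ c) :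
    plIso c p q hp hq x = x := by
  simp [plIso, plFun, hx]

lemma plIso_map {c p q : ℚ} (hp : c < p) (hq : c < q) :
    plIso c p q hp hq p = q := by
  have hpc : (0:ℚ) < p - c := by linarith
  simp only [plIso, plFun, Equiv.coe_fn_mk, RelIso.coe_fn_mk]
  rw [if_neg (by push_neg; linarith)]
  field_simp
  ring

/-- Any two finite configurations of `n` ordered pairs with the same order type are
related by an order isomorphism of ℚ. -/
lemma pairExt : ∀ (n : ℕ) (A B A' B' : Fin n → ℚ),
    (∀ i, A i < B i) → (∀ i, A' i < B' i) →
    (∀ i j, i < j → B i < A j) → (∀ i j, i < j → B' i < A' j) →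
    ∃ f : ℚ ≃o ℚ, ∀ i, f (A i) = A' i ∧ f (B i) = B' i := by
  intro n
  induction n with
  | zero => exact fun A B A' B' _ _ _ _ => ⟨OrderIso.refl ℚ, fun i => i.elim0⟩
  | succ n ih =>
    intro A B A' B' h1 h1' h2 h2'
    obtain ⟨f', hf'⟩ := ih (A ∘ Fin.castSucc) (B ∘ Fin.castSucc) (A' ∘ Fin.castSucc)
      (B' ∘ Fin.castSucc) (fun i => h1 _) (fun i => h1' _)
      (fun i j hij => h2 _ _ (by simpa using hij)) (fun i j hij => h2' _ _ (by simpa using hij))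
    set L := Fin.last n with hL
    rcases Nat.eq_zero_or_pos n with hn | hn
    · -- no previous pairs: translation, then one block
      subst hn
      let g : ℚ ≃o ℚ := OrderIso.addRight (A' L - A L)
      have hgA : g (A L) = A' L := by show A L + (A' L - A L) = A' L; ring
      have hgB : g (B L) = B L + (A' L - A L) := by show B L + (A' L - A L) = B L + (A' L - A L); rfl
      have hp : A' L < B L + (A' L - A L) := by have := h1 L; linarith
      have hq : A' L < B' L := h1' L
      refine ⟨g.trans (plIso (A' L) _ _ hp hq), fun i => ?_⟩
      have hiL : i = L := by apply Fin.ext; omega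
      subst hiL
      constructor
      · simp only [OrderIso.trans_apply, hgA]
        exact plIso_fix hp hq le_rfl
      · simp only [OrderIso.trans_apply, hgB]
        exact plIso_map hp hq
    · -- there is a previous top pair
      let t : Fin n := ⟨n - 1, by omega⟩
      have htlt : t.castSucc < L := Fin.castSucc_lt_last t
      have hf'A : ∀ i : Fin n, f' (A i.castSucc) = A' i.castSucc := fun i => (hf' i).1
      have hf'B : ∀ i : Fin n, f' (B i.castSucc) = B' i.castSucc := fun i => (hf' i).2
      have hp1 : B' t.castSucc < f' (A L) := by
        rw [← hf'B t]
        exact f'.strictMono (h2 t.castSucc L htlt)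
      have hq1 : B' t.castSucc < A' L := h2' t.castSucc L htlt
      set g1 := plIso (B' t.castSucc) _ _ hp1 hq1 with hg1def
      have hg1A : g1 (f' (A L)) = A' L := plIso_map hp1 hq1
      have hp2 : A' L < g1 (f' (B L)) := by
        rw [← hg1A]
        exact g1.strictMono (f'.strictMono (h1 L))
      have hq2 : A' L < B' L := h1' L
      set g2 := plIso (A' L) _ _ hp2 hq2 with hg2def
      refine ⟨(f'.trans g1).trans g2, fun i => ?_⟩
      have hBle : ∀ j : Fin n, B' j.castSucc ≤ B' t.castSucc := by
        intro j
        rcases eq_or_lt_of_le (show j ≤ t by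
          rcases j with ⟨jv, hjv⟩; simp only [Fin.le_def]; show jv ≤ n - 1; omega) with h | h
        · rw [h]
        · have := h2' j.castSucc t.castSucc (by simpa using h)
          have := h1' t.castSucc
          linarith
      refine Fin.lastCases ?_ ?_ i
      · constructor
        · simp only [OrderIso.trans_apply, hg1A, ← hL]
          exact plIso_fix hp2 hq2 le_rfl
        · simp only [OrderIso.trans_apply, ← hL]
          exact plIso_map hp2 hq2
      · intro j
        have hA'le : A' j.castSucc ≤ B' t.castSucc := le_of_lt (lt_of_lt_of_le (h1' _) (hBle j))
        have hB'le : B' j.castSucc ≤ B' t.castSucc := hBle j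
        constructor
        · simp only [OrderIso.trans_apply, hf'A j, hg1def]
          rw [plIso_fix hp1 hq1 hA'le]
          exact plIso_fix hp2 hq2 (le_of_lt (lt_of_le_of_lt hA'le hq1))
        · simp only [OrderIso.trans_apply, hf'B j, hg1def]
          rw [plIso_fix hp1 hq1 hB'le]
          exact plIso_fix hp2 hq2 (le_of_lt (lt_of_le_of_lt hB'le hq1))


def clamp01 (t : ℚ) : ℚ := max 0 (min 1 t)

lemma clamp01_bounds (t : ℚ) : 0 ≤ clamp01 t ∧ clamp01 t ≤ 1 := by
  unfold clamp01
  constructor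
  · exact le_max_left _ _
  · rcases le_total 1 t with h | h <;> rcases le_total (0:ℚ) t with h' | h' <;>
      simp [max_le_iff, min_le_iff] <;> linarith

lemma clamp01_of {t : ℚ} (h0 : 0 ≤ t) (h1 : t ≤ 1) : clamp01 t = t := by
  unfold clamp01
  rw [min_eq_right h1, max_eq_right h0]

/-- A point of `Q↑d` inside the box determined by `X i < Y i`, with parameters `t`. -/
def mkQval (X Y : Fin d' → ℚ) (t : Fin d' → ℚ) : Fin d' → ℚ :=
  fun i => X i + clamp01 (t i) * (Y i - X i)

lemma mkQval_mem {d' : ℕ} (X Y : Fin d' → ℚ) (hXY : ∀ i, X i < Y i) (t : Fin d' → ℚ) (i : Fin d') :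
    X i ≤ mkQval X Y t i ∧ mkQval X Y t i ≤ Y i := by
  obtain ⟨h0, h1⟩ := clamp01_bounds (t i)
  have hd := hXY i
  unfold mkQval
  constructor <;> nlinarith

lemma mkQval_strictMono {d' : ℕ} (X Y : Fin d' → ℚ) (hXY : ∀ i, X i < Y i)
    (hord : ∀ i j : Fin d', i < j → Y i < X j) (t : Fin d' → ℚ) :
    StrictMono (mkQval X Y t) := by
  intro i j hij
  obtain ⟨_, h2⟩ := mkQval_mem X Y hXY t i
  obtain ⟨h3, _⟩ := mkQval_mem X Y hXY t j
  have := hord i j hij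
  linarith

lemma mkQval_lt_iff {d' : ℕ} (X Y : Fin d' → ℚ) (hXY : ∀ i, X i < Y i)
    (t u : Fin d' → ℚ) (i : Fin d')
    (ht : 0 ≤ t i ∧ t i ≤ 1) (hu : 0 ≤ u i ∧ u i ≤ 1) :
    (mkQval X Y t i < mkQval X Y u i ↔ t i < u i) := by
  unfold mkQval
  rw [clamp01_of ht.1 ht.2, clamp01_of hu.1 hu.2]
  have hd := hXY i
  constructor <;> intro h <;> nlinarith

/-- Per-coordinate parameter triples realizing sign patterns `(s, t, r)`. -/
def tri (s t r : Bool) : ℚ × ℚ × ℚ :=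
  match s, t with
  | true, true => (0, 1/2, 1)
  | true, false => if r then (0, 1, 1/2) else (1/2, 1, 0)
  | false, true => if r then (1/2, 0, 1) else (1, 0, 1/2)
  | false, false => (1, 1/2, 0)

lemma tri_spec (s t r : Bool) (h : s = t → r = s) :
    (0 ≤ (tri s t r).1 ∧ (tri s t r).1 ≤ 1) ∧
    (0 ≤ (tri s t r).2.1 ∧ (tri s t r).2.1 ≤ 1) ∧
    (0 ≤ (tri s t r).2.2 ∧ (tri s t r).2.2 ≤ 1) ∧
    ((tri s t r).1 < (tri s t r).2.1 ↔ s = true) ∧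
    ((tri s t r).2.1 < (tri s t r).2.2 ↔ t = true) ∧
    ((tri s t r).1 < (tri s t r).2.2 ↔ r = true) ∧
    (tri s t r).1 ≠ (tri s t r).2.1 ∧ (tri s t r).2.1 ≠ (tri s t r).2.2 ∧
    (tri s t r).1 ≠ (tri s t r).2.2 := by
  rcases s <;> rcases t <;> rcases r <;> simp_all [tri] <;> norm_num


/-- Combinatorial core: a "linear-order-like" truth assignment on tie-free sign patterns
has a dominant coordinate. -/
lemma boolComb (d : ℕ) (T : (Fin d → Bool) → Prop)
    (hneg : ∀ σ : Fin d → Bool, T (fun i => !(σ i)) ↔ ¬ T σ)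
    (hcomp : ∀ σ τ ρ : Fin d → Bool, (∀ i, σ i = τ i → ρ i = σ i) → T σ → T τ → T ρ) :
    ∃ k : Fin d, (∀ σ, σ k = true → T σ) ∨ (∀ σ, σ k = false → T σ) := by
  -- find some true pattern
  have hσ0 : ∃ σ0, T σ0 := by
    by_cases h : T (fun _ => true)
    · exact ⟨_, h⟩
    · exact ⟨_, (hneg (fun _ => true)).mpr h⟩
  obtain ⟨σ0, hTσ0⟩ := hσ0
  -- reoriented truth assignment
  set T' : (Fin d → Bool) → Prop := fun π => T (fun i => σ0 i == π i) with hT'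
  have hT'one : T' (fun _ => true) := by
    have : (fun i => σ0 i == true) = σ0 := by funext i; cases σ0 i <;> rfl
    simpa [hT', this] using hTσ0
  have hneg' : ∀ π : Fin d → Bool, T' (fun i => !(π i)) ↔ ¬ T' π := by
    intro π
    have : (fun i => σ0 i == !(π i)) = (fun i => !(σ0 i == π i)) := by
      funext i; cases σ0 i <;> cases π i <;> rfl
    simp only [hT', this]
    exact hneg _
  have hcomp' : ∀ π τ ρ : Fin d → Bool, (∀ i, π i = τ i → ρ i = π i) →
      T' π → T' τ → T' ρ := by
    intro π τ ρ hc
    apply hcomp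
    intro i h
    have hπτ : π i = τ i := by
      revert h; cases σ0 i <;> cases π i <;> cases τ i <;> simp
    have := hc i hπτ
    rw [this]
  -- Claim B: some singleton pattern is true
  have claimB : ∃ k : Fin d, T' (fun i => decide (i = k)) := by
    by_contra hcon
    push_neg at hcon
    have hdel : ∀ k : Fin d, T' (fun i => !(decide (i = k))) := by
      intro k
      exact (hneg' _).mpr (hcon k)
    have hmu : ∀ j : ℕ, j ≤ d → T' (fun i => decide (j ≤ (i : ℕ))) := by
      intro j
      induction j with
      | zero => intro _; simpa using hT'one
      | succ j ihj =>
        intro hjd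
        have hjd' : j < d := by omega
        have h1 := ihj (by omega)
        have h2 := hdel ⟨j, hjd'⟩
        apply hcomp' _ _ _ _ h1 h2
        intro i h
        have hij : (i : ℕ) ≠ j := by
          by_contra he
          have : decide (j ≤ (i:ℕ)) = true := by simp [he.symm.le]
          have h2 : (!decide (i = (⟨j, hjd'⟩ : Fin d))) = false := by
            simp [Fin.ext_iff, he]
          rw [this, h2] at h
          simp at h
        -- now i ≠ j; if i < j both sides false-true mismatch; if i > j condition
        by_cases hlt : (i : ℕ) < j
        · exfalso
          have hl : decide (j ≤ (i:ℕ)) = false := by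
            simp only [decide_eq_false_iff_not]; omega
          have hr : (!decide (i = (⟨j, hjd'⟩ : Fin d))) = true := by
            simp [Fin.ext_iff]; omega
          rw [hl, hr] at h; simp at h
        · show decide (j + 1 ≤ (i:ℕ)) = decide (j ≤ (i:ℕ))
          simp only [decide_eq_decide]
          omega
    have hbot := hmu d le_rfl
    have hbot' : (fun i : Fin d => decide (d ≤ (i:ℕ))) = (fun i : Fin d => !(true : Bool)) := by
      funext i
      have : ¬ (d ≤ (i : ℕ)) := by omega
      simp [this]
    rw [hbot'] at hbot
    exact (hneg' (fun _ => true)).mp hbot hT'one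
  obtain ⟨k, hk⟩ := claimB
  -- Claim A: k dominates
  have claimA : ∀ π : Fin d → Bool, π k = true → T' π := by
    intro π hπk
    apply hcomp' _ _ _ _ hk hT'one
    intro i h
    have : i = k := by
      by_contra hne
      simp [hne] at h
    subst this
    simp [hπk]
  refine ⟨k, ?_⟩
  cases hσ0k : σ0 k with
  | true =>
    left
    intro σ hσk
    have := claimA (fun i => σ0 i == σ i) (by simp [hσ0k, hσk])
    have he : (fun i => σ0 i == (σ0 i == σ i)) = σ := by
      funext i; cases σ0 i <;> cases σ i <;> rfl
    simpa [hT', he] using this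
  | false =>
    right
    intro σ hσk
    have := claimA (fun i => σ0 i == σ i) (by simp [hσ0k, hσk])
    have he : (fun i => σ0 i == (σ0 i == σ i)) = σ := by
      funext i; cases σ0 i <;> cases σ i <;> rfl
    simpa [hT', he] using this

/-- The diagonal map on `QUp d` induced by an order isomorphism of ℚ. -/
def diagEquiv (d : ℕ) (f : ℚ ≃o ℚ) : QUp d ≃ QUp d where
  toFun a := ⟨fun i => f (a.1 i), f.strictMono.comp a.2⟩
  invFun a := ⟨fun i => f.symm (a.1 i), f.symm.strictMono.comp a.2⟩
  left_inv a := by ext i; simp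
  right_inv a := by ext i; simp

/-- The diagonal map as an isomorphism of the structure `(Q↑d; <₁, …, <_d)`. -/
def diagLEquiv (d : ℕ) (f : ℚ ≃o ℚ) : QUp d ≃[CoordLang d] QUp d where
  toEquiv := diagEquiv d f
  map_fun' := fun {n} F _ => F.elim
  map_rel' := fun {n} r x => by
    match n, r with
    | 0, r => exact r.elim
    | 1, r => exact r.elim
    | 2, r =>
      show coordRelInterp d 2 r _ ↔ coordRelInterp d 2 r x
      simp [coordRelInterp, coordBinary, diagEquiv]
    | (m + 3), r => exact r.elim

lemma diag_realize {d : ℕ} (φ : (CoordLang d).Formula (Fin 2)) (f : ℚ ≃o ℚ) (a b : QUp d) :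
    φ.Realize ![diagEquiv d f a, diagEquiv d f b] ↔ φ.Realize ![a, b] := by
  have h := FirstOrder.Language.StrongHomClass.realize_formula (diagLEquiv d f) φ (v := ![a, b])
  have he : ⇑(diagLEquiv d f) ∘ ![a, b] = ![diagEquiv d f a, diagEquiv d f b] := by
    funext i
    fin_cases i <;> rfl
  rw [he] at h
  exact h

set_option maxHeartbeats 2000000 in
/-- If `I₁ < ⋯ < I_d` are nondegenerate intervals of ℚ and `≺` is a strict linear order on
`Q↑d` definable without parameters in `(Q↑d; <₁, …, <_d)`, then there is a coordinate `k`
such that on the box `I₁ × ⋯ × I_d`, `a_k < b_k` always implies `ā ≺ b̄`, or `a_k < b_k`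
always implies `b̄ ≺ ā`. -/
theorem definable_order_on_box (d : ℕ) (hd : 1 ≤ d)
    (I : Fin d → Set ℚ)
    (hinterval : ∀ i, (I i).OrdConnected)
    (hnondeg : ∀ i, ∃ x ∈ I i, ∃ y ∈ I i, x ≠ y)
    (hordered : ∀ i j : Fin d, i < j → ∀ x ∈ I i, ∀ y ∈ I j, x < y)
    (prec : QUp d → QUp d → Prop)
    (hirrefl : ∀ a, ¬ prec a a)
    (htrans : ∀ a b c, prec a b → prec b c → prec a c)
    (htotal : ∀ a b, a ≠ b → prec a b ∨ prec b a)
    (hdef : ∃ φ : (CoordLang d).Formula (Fin 2),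
      ∀ a b : QUp d, prec a b ↔ φ.Realize ![a, b]) :
    ∃ k : Fin d,
      (∀ a b : QUp d, (∀ i, a.1 i ∈ I i) → (∀ i, b.1 i ∈ I i) →
        a.1 k < b.1 k → prec a b) ∨
      (∀ a b : QUp d, (∀ i, a.1 i ∈ I i) → (∀ i, b.1 i ∈ I i) →
        a.1 k < b.1 k → prec b a) := by
  obtain ⟨φ, hφ⟩ := hdef
  -- invariance of `prec` under diagonal automorphisms
  have hinv : ∀ (f : ℚ ≃o ℚ) (a b : QUp d),
      prec ((diagEquiv d f) a) ((diagEquiv d f) b) ↔ prec a b := by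
    intro f a b
    rw [hφ, hφ, diag_realize]
  -- choose two points in each interval
  have hXY' : ∀ i, ∃ p ∈ I i, ∃ q ∈ I i, p < q := by
    intro i
    obtain ⟨x, hx, y, hy, hxy⟩ := hnondeg i
    rcases lt_or_gt_of_ne hxy with h | h
    exacts [⟨x, hx, y, hy, h⟩, ⟨y, hy, x, hx, h⟩]
  choose X hX Y hY hXYlt using hXY'
  have hord : ∀ i j : Fin d, i < j → Y i < X j :=
    fun i j hij => hordered i j hij _ (hY i) _ (hX j)
  -- the parametrized box points
  set M : (Fin d → ℚ) → QUp d :=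
    fun t => ⟨mkQval X Y t, mkQval_strictMono X Y hXYlt hord t⟩ with hMdef
  have hMmem : ∀ t i, (M t).1 i ∈ I i := by
    intro t i
    obtain ⟨h1, h2⟩ := mkQval_mem X Y hXYlt t i
    exact (hinterval i).out (hX i) (hY i) ⟨h1, h2⟩
  have hMlt : ∀ (t u : Fin d → ℚ) (i : Fin d), (0 ≤ t i ∧ t i ≤ 1) → (0 ≤ u i ∧ u i ≤ 1) →
      ((M t).1 i < (M u).1 i ↔ t i < u i) := by
    intro t u i ht hu
    exact mkQval_lt_iff X Y hXYlt t u i ht hu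
  have hMne : ∀ (t u : Fin d → ℚ) (i : Fin d), (0 ≤ t i ∧ t i ≤ 1) → (0 ≤ u i ∧ u i ≤ 1) →
      t i ≠ u i → (M t).1 i ≠ (M u).1 i := by
    intro t u i ht hu hne
    rcases lt_or_gt_of_ne hne with h | h
    · exact ne_of_lt ((hMlt t u i ht hu).mpr h)
    · exact ne_of_gt ((hMlt u t i hu ht).mpr h)
  -- invariance of `prec` on the box under order-pattern equivalence
  have hpat : ∀ a b a' b' : QUp d, (∀ i, a.1 i ∈ I i) → (∀ i, b.1 i ∈ I i) →
      (∀ i, a'.1 i ∈ I i) → (∀ i, b'.1 i ∈ I i) →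
      (∀ i, a.1 i ≠ b.1 i) → (∀ i, a'.1 i ≠ b'.1 i) →
      (∀ i, (a.1 i < b.1 i ↔ a'.1 i < b'.1 i)) → (prec a b ↔ prec a' b') := by
    intro a b a' b' ha hb ha' hb' hne hne' hiff
    obtain ⟨f, hf⟩ := pairExt d (fun i => min (a.1 i) (b.1 i)) (fun i => max (a.1 i) (b.1 i))
      (fun i => min (a'.1 i) (b'.1 i)) (fun i => max (a'.1 i) (b'.1 i))
      (fun i => min_lt_max.mpr (hne i)) (fun i => min_lt_max.mpr (hne' i))
      (fun i j hij => max_lt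
        (lt_min (hordered i j hij _ (ha i) _ (ha j)) (hordered i j hij _ (ha i) _ (hb j)))
        (lt_min (hordered i j hij _ (hb i) _ (ha j)) (hordered i j hij _ (hb i) _ (hb j))))
      (fun i j hij => max_lt
        (lt_min (hordered i j hij _ (ha' i) _ (ha' j)) (hordered i j hij _ (ha' i) _ (hb' j)))
        (lt_min (hordered i j hij _ (hb' i) _ (ha' j)) (hordered i j hij _ (hb' i) _ (hb' j))))
    have hfa : ∀ i, f (a.1 i) = a'.1 i ∧ f (b.1 i) = b'.1 i := by
      intro i
      obtain ⟨hm, hM'⟩ := hf i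
      rcases lt_or_gt_of_ne (hne i) with h | h
      · have h' := (hiff i).mp h
        rw [min_eq_left h.le, min_eq_left h'.le] at hm
        rw [max_eq_right h.le, max_eq_right h'.le] at hM'
        exact ⟨hm, hM'⟩
      · have h' : b'.1 i < a'.1 i := by
          rcases lt_trichotomy (a'.1 i) (b'.1 i) with h'' | h'' | h''
          · exact absurd ((hiff i).mpr h'') (not_lt.mpr h.le)
          · exact absurd h'' (hne' i)
          · exact h''
        rw [min_eq_right h.le, min_eq_right h'.le] at hm
        rw [max_eq_left h.le, max_eq_left h'.le] at hM'
        exact ⟨hM', hm⟩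
    have hga : (diagEquiv d f) a = a' := Subtype.ext (funext fun i => (hfa i).1)
    have hgb : (diagEquiv d f) b = b' := Subtype.ext (funext fun i => (hfa i).2)
    rw [← hga, ← hgb, hinv]
  -- the canonical truth assignment on tie-free patterns
  set T : (Fin d → Bool) → Prop :=
    fun σ => prec (M (fun i => if σ i then 0 else 1)) (M (fun i => if σ i then 1 else 0))
    with hTdef
  have hbnd : ∀ (σ : Fin d → Bool) (i : Fin d),
      (0 ≤ (if σ i then (0:ℚ) else 1) ∧ (if σ i then (0:ℚ) else 1) ≤ 1) ∧
      (0 ≤ (if σ i then (1:ℚ) else 0) ∧ (if σ i then (1:ℚ) else 0) ≤ 1) := by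
    intro σ i; cases σ i <;> norm_num
  -- key: on tie-free pairs in the box, prec is determined by the pattern
  have hkey : ∀ (σ : Fin d → Bool) (a b : QUp d), (∀ i, a.1 i ∈ I i) → (∀ i, b.1 i ∈ I i) →
      (∀ i, a.1 i ≠ b.1 i) → (∀ i, (a.1 i < b.1 i ↔ σ i = true)) → (prec a b ↔ T σ) := by
    intro σ a b ha hb hne hσ
    apply hpat a b _ _ ha hb (fun i => hMmem _ i) (fun i => hMmem _ i) hne
    · intro i
      apply hMne _ _ i ((hbnd σ i).1) ((hbnd σ i).2)
      cases h : σ i <;> norm_num [h]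
    · intro i
      rw [hσ i, hMlt _ _ i ((hbnd σ i).1) ((hbnd σ i).2)]
      cases h : σ i <;> norm_num [h]
  have i0 : Fin d := ⟨0, hd⟩
  -- `T` flips under pattern negation
  have hneg : ∀ σ : Fin d → Bool, T (fun i => !(σ i)) ↔ ¬ T σ := by
    intro σ
    set u := M (fun i => if σ i then (0:ℚ) else 1) with hu
    set v := M (fun i => if σ i then (1:ℚ) else 0) with hv
    have hne : ∀ i, u.1 i ≠ v.1 i := by
      intro i
      apply hMne _ _ i ((hbnd σ i).1) ((hbnd σ i).2)
      cases h : σ i <;> norm_num [h]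
    have h1 : T (fun i => !(σ i)) ↔ prec v u := by
      rw [Iff.comm]
      apply hkey _ v u (fun i => hMmem _ i) (fun i => hMmem _ i) (fun i => (hne i).symm)
      intro i
      rw [hMlt _ _ i ((hbnd σ i).2) ((hbnd σ i).1)]
      cases h : σ i <;> norm_num [h]
    rw [h1]
    have huv : u ≠ v := fun h => hne i0 (by rw [h])
    constructor
    · intro h hc
      exact hirrefl u (htrans _ _ _ hc h)
    · intro h
      rcases htotal u v huv with h' | h'
      · exact absurd h' h
      · exact h'
  -- `T` respects composition of patterns
  have hcomp : ∀ σ τ ρ : Fin d → Bool, (∀ i, σ i = τ i → ρ i = σ i) → T σ → T τ → T ρ := by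
    intro σ τ ρ hc hTσ hTτ
    have hspec := fun i => tri_spec (σ i) (τ i) (ρ i) (hc i)
    set x := M (fun i => (tri (σ i) (τ i) (ρ i)).1) with hx
    set y := M (fun i => (tri (σ i) (τ i) (ρ i)).2.1) with hy
    set z := M (fun i => (tri (σ i) (τ i) (ρ i)).2.2) with hz
    have hb1 := fun i => (hspec i).1
    have hb2 := fun i => (hspec i).2.1
    have hb3 := fun i => (hspec i).2.2.1
    have p1 : prec x y :=
      (hkey σ x y (fun i => hMmem _ i) (fun i => hMmem _ i)
        (fun i => hMne _ _ i (hb1 i) (hb2 i) (hspec i).2.2.2.2.2.2.1)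
        (fun i => by rw [hMlt _ _ i (hb1 i) (hb2 i)]; exact (hspec i).2.2.2.1)).mpr hTσ
    have p2 : prec y z :=
      (hkey τ y z (fun i => hMmem _ i) (fun i => hMmem _ i)
        (fun i => hMne _ _ i (hb2 i) (hb3 i) (hspec i).2.2.2.2.2.2.2.1)
        (fun i => by rw [hMlt _ _ i (hb2 i) (hb3 i)]; exact (hspec i).2.2.2.2.1)).mpr hTτ
    exact (hkey ρ x z (fun i => hMmem _ i) (fun i => hMmem _ i)
        (fun i => hMne _ _ i (hb1 i) (hb3 i) (hspec i).2.2.2.2.2.2.2.2)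
        (fun i => by rw [hMlt _ _ i (hb1 i) (hb3 i)]; exact (hspec i).2.2.2.2.2.1)).mp
      (htrans _ _ _ p1 p2)
  obtain ⟨k, hk⟩ := boolComb d T hneg hcomp
  -- middle-point construction
  have hmid : ∀ (a b : QUp d), (∀ i, a.1 i ∈ I i) → (∀ i, b.1 i ∈ I i) → a.1 k < b.1 k →
      ∃ c : QUp d, (∀ i, c.1 i ∈ I i) ∧ (∀ i, c.1 i ≠ a.1 i) ∧ (∀ i, c.1 i ≠ b.1 i) ∧
        a.1 k < c.1 k ∧ c.1 k < b.1 k := by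
    intro a b ha hb hab
    have hc : ∀ i : Fin d, ∃ z ∈ I i,
        (z ≠ a.1 i ∧ z ≠ b.1 i) ∧ (i = k → a.1 k < z ∧ z < b.1 k) := by
      intro i
      by_cases hik : i = k
      · subst hik
        refine ⟨(a.1 i + b.1 i) / 2, ?_, ⟨by intro h; rw [← h] at hab; linarith,
          by intro h; rw [← h] at hab; linarith⟩, fun _ => ⟨by linarith, by linarith⟩⟩
        exact (hinterval i).out (ha i) (hb i) ⟨by linarith, by linarith⟩
      · have hmidmem : (X i + Y i) / 2 ∈ I i := by
          have := hXYlt i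
          exact (hinterval i).out (hX i) (hY i) ⟨by linarith, by linarith⟩
        by_cases h1 : X i ≠ a.1 i ∧ X i ≠ b.1 i
        · exact ⟨X i, hX i, h1, fun h => absurd h hik⟩
        by_cases h2 : Y i ≠ a.1 i ∧ Y i ≠ b.1 i
        · exact ⟨Y i, hY i, h2, fun h => absurd h hik⟩
        push_neg at h1 h2
        have hXab : X i = a.1 i ∨ X i = b.1 i := by
          by_cases hXa : X i = a.1 i
          · exact Or.inl hXa
          · exact Or.inr (h1 hXa)
        have hYab : Y i = a.1 i ∨ Y i = b.1 i := by
          by_cases hYa : Y i = a.1 i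
          · exact Or.inl hYa
          · exact Or.inr (h2 hYa)
        have hXYne := hXYlt i
        refine ⟨(X i + Y i) / 2, hmidmem, ⟨?_, ?_⟩, fun h => absurd h hik⟩
        · rcases hXab with h | h <;> rcases hYab with h' | h'
          · exfalso; rw [h'] at hXYne; rw [h] at hXYne; exact lt_irrefl _ hXYne
          · rw [← h]; intro hc; linarith [hXYlt i]
          · rw [← h']; intro hc; linarith [hXYlt i]
          · exfalso; rw [h'] at hXYne; rw [h] at hXYne; exact lt_irrefl _ hXYne
        · rcases hXab with h | h <;> rcases hYab with h' | h'
          · exfalso; rw [h'] at hXYne; rw [h] at hXYne; exact lt_irrefl _ hXYne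
          · rw [← h']; intro hc; linarith [hXYlt i]
          · rw [← h]; intro hc; linarith [hXYlt i]
          · exfalso; rw [h'] at hXYne; rw [h] at hXYne; exact lt_irrefl _ hXYne
    choose c hcmem hcne hck using hc
    refine ⟨⟨c, fun i j hij => hordered i j hij _ (hcmem i) _ (hcmem j)⟩,
      hcmem, fun i => (hcne i).1, fun i => (hcne i).2, (hck k rfl).1, (hck k rfl).2⟩
  rcases hk with hk | hk
  · refine ⟨k, Or.inl ?_⟩
    intro a b ha hb hab
    obtain ⟨c, hcmem, hca, hcb, hk1, hk2⟩ := hmid a b ha hb hab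
    have p1 : prec a c :=
      (hkey (fun i => decide (a.1 i < c.1 i)) a c ha hcmem (fun i => (hca i).symm)
        (fun i => by simp)).mpr (hk _ (by simp [hk1]))
    have p2 : prec c b :=
      (hkey (fun i => decide (c.1 i < b.1 i)) c b hcmem hb hcb
        (fun i => by simp)).mpr (hk _ (by simp [hk2]))
    exact htrans _ _ _ p1 p2
  · refine ⟨k, Or.inr ?_⟩
    intro a b ha hb hab
    obtain ⟨c, hcmem, hca, hcb, hk1, hk2⟩ := hmid a b ha hb hab
    have p1 : prec b c :=
      (hkey (fun i => decide (b.1 i < c.1 i)) b c hb hcmem (fun i => (hcb i).symm)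
        (fun i => by simp)).mpr (hk _ (by simp; linarith))
    have p2 : prec c a :=
      (hkey (fun i => decide (c.1 i < a.1 i)) c a hcmem ha hca
        (fun i => by simp)).mpr (hk _ (by simp; linarith))
    exact htrans _ _ _ p1 p2
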